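/- For every integer s ≥ 2, with p = ⌊√s⌋ and q = ⌊s/4⌋, the inequality 4(s − q) > (p+1)² holds; consequently the configuration R_{s,p,q} is an edge-perimeter minimizer among subsets of Z^2 with s² − s⌊√s⌋ − ⌊s/4⌋ elements. -/

import Mathlib

open Finset Filter

/-- Adjacency in `ℤ²`: Euclidean distance one. -/
def adj2 (x y : ℤ × ℤ) : Prop :=
  (x.1 - y.1) ^ 2 + (x.2 - y.2) ^ 2 = 1

/-- Cardinality of the edge boundary `Θ₂(E)` in `ℤ²` (ordered pairs). -/
noncomputable def theta2 (E : Finset (ℤ × ℤ)) : ℕ :=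
  Set.ncard {p : (ℤ × ℤ) × (ℤ × ℤ) | adj2 p.1 p.2 ∧ p.1 ∈ E ∧ p.2 ∉ E}

/-- Number of ordered bonded pairs of `E ⊂ ℤ²`; this equals `2 b(E)`. -/
noncomputable def bondPairs2 (E : Finset (ℤ × ℤ)) : ℕ :=
  Set.ncard {p : (ℤ × ℤ) × (ℤ × ℤ) | adj2 p.1 p.2 ∧ p.1 ∈ E ∧ p.2 ∈ E}

/-- Number of unit bonds `b(E) = ½·#{(x,y) ∈ E×E : |x−y|=1}`. -/
noncomputable def bonds2 (E : Finset (ℤ × ℤ)) : ℕ := bondPairs2 E / 2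

/-- The configuration `R_{s,p,q} ⊂ ℤ²`: the lattice points of the rectangle
`[1, s−p−1] × [1, s]` together with the column `{s−p} × [1, s−q]`. -/
noncomputable def Rspq (s p q : ℕ) : Finset (ℤ × ℤ) :=
  (Icc (1 : ℤ) ((s : ℤ) - p - 1) ×ˢ Icc (1 : ℤ) (s : ℤ)) ∪
    ({(s : ℤ) - p} ×ˢ Icc (1 : ℤ) ((s : ℤ) - q))

/-! ### Auxiliary machinery -/

def Dirs : Finset (ℤ × ℤ) := {(1,0), (-1,0), (0,1), (0,-1)}

lemma sq_add_sq_eq_one (a b : ℤ) : a^2 + b^2 = 1 ↔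
    (a=1∧b=0)∨(a=-1∧b=0)∨(a=0∧b=1)∨(a=0∧b=-1) := by
  constructor
  · intro h
    have h1a : -1 ≤ a := by nlinarith [sq_nonneg b, sq_nonneg (a+1)]
    have h1b : a ≤ 1 := by nlinarith [sq_nonneg b, sq_nonneg (a-1)]
    have h2a : -1 ≤ b := by nlinarith [sq_nonneg a, sq_nonneg (b+1)]
    have h2b : b ≤ 1 := by nlinarith [sq_nonneg a, sq_nonneg (b-1)]
    interval_cases a <;> interval_cases b <;> simp_all
  · rintro (⟨rfl,rfl⟩|⟨rfl,rfl⟩|⟨rfl,rfl⟩|⟨rfl,rfl⟩) <;> norm_num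

lemma adj2_iff (x y : ℤ × ℤ) : adj2 x y ↔ ∃ d ∈ Dirs, y = x + d := by
  rw [adj2, sq_add_sq_eq_one]
  simp only [Dirs, mem_insert, mem_singleton]
  constructor
  · rintro (⟨h1,h2⟩|⟨h1,h2⟩|⟨h1,h2⟩|⟨h1,h2⟩)
    · exact ⟨(-1,0), by tauto, by ext <;> simp <;> omega⟩
    · exact ⟨(1,0), by tauto, by ext <;> simp <;> omega⟩
    · exact ⟨(0,-1), by tauto, by ext <;> simp <;> omega⟩
    · exact ⟨(0,1), by tauto, by ext <;> simp <;> omega⟩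
  · rintro ⟨d, (rfl|rfl|rfl|rfl), rfl⟩ <;> simp

lemma pairset_card (E : Finset (ℤ × ℤ)) (P : ℤ × ℤ → Prop) [DecidablePred P] :
    Set.ncard {p : (ℤ × ℤ) × (ℤ × ℤ) | adj2 p.1 p.2 ∧ p.1 ∈ E ∧ P p.2} =
      ∑ d ∈ Dirs, (E.filter (fun x => P (x + d))).card := by
  have hset : {p : (ℤ × ℤ) × (ℤ × ℤ) | adj2 p.1 p.2 ∧ p.1 ∈ E ∧ P p.2} =
      ↑(Dirs.biUnion (fun d => (E.filter (fun x => P (x + d))).image (fun x => (x, x + d)))) := by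
    ext ⟨x, y⟩
    simp only [Set.mem_setOf_eq, coe_biUnion, mem_coe, Set.mem_iUnion, mem_image, mem_filter,
      adj2_iff, Prod.mk.injEq]
    constructor
    · rintro ⟨⟨d, hd, rfl⟩, hx, hP⟩
      exact ⟨d, hd, x, ⟨hx, hP⟩, rfl, rfl⟩
    · rintro ⟨d, hd, z, ⟨hz, hP⟩, rfl, rfl⟩
      exact ⟨⟨d, hd, rfl⟩, hz, hP⟩
  rw [hset, Set.ncard_coe_finset]
  rw [card_biUnion]
  · refine Finset.sum_congr rfl fun d _ => ?_
    exact card_image_of_injective _ (fun a b h => by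
      have := congrArg Prod.fst h; simpa using this)
  · intro d₁ h₁ d₂ h₂ hne
    simp only [disjoint_left, mem_image, mem_filter]
    rintro p ⟨a, ha, h1⟩ ⟨b, hb, h2⟩
    apply hne
    rw [← h2] at h1
    have hab : a = b := by have := congrArg Prod.fst h1; simpa using this
    subst hab
    have := congrArg Prod.snd h1
    simpa using this

def cnt (F : Finset (ℤ × ℤ)) (d : ℤ × ℤ) : ℕ := (F.filter (fun x => x + d ∈ F)).card

lemma sum_dirs (f : ℤ × ℤ → ℕ) :
    ∑ d ∈ Dirs, f d = f (1,0) + f (-1,0) + f (0,1) + f (0,-1) := by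
  show ∑ d ∈ ({(1,0), (-1,0), (0,1), (0,-1)} : Finset (ℤ × ℤ)), f d = _
  rw [Finset.sum_insert (by decide), Finset.sum_insert (by decide),
    Finset.sum_insert (by decide), Finset.sum_singleton]
  ring

lemma bondPairs2_eq (E : Finset (ℤ × ℤ)) :
    bondPairs2 E = ∑ d ∈ Dirs, cnt E d := pairset_card E (· ∈ E)

lemma theta2_eq (E : Finset (ℤ × ℤ)) :
    theta2 E = ∑ d ∈ Dirs, (E.filter (fun x => x + d ∉ E)).card := pairset_card E (· ∉ E)

lemma theta_add_bond (E : Finset (ℤ × ℤ)) :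
    theta2 E + bondPairs2 E = 4 * E.card := by
  rw [theta2_eq, bondPairs2_eq, ← Finset.sum_add_distrib]
  have : ∀ d ∈ Dirs, (E.filter (fun x => x + d ∉ E)).card + cnt E d = E.card := by
    intro d _
    rw [cnt, add_comm]
    exact Finset.card_filter_add_card_filter_not _
  rw [Finset.sum_congr rfl this, Finset.sum_const]
  simp [Dirs]

lemma cnt_neg (F : Finset (ℤ × ℤ)) (d : ℤ × ℤ) : cnt F (-d) = cnt F d := by
  unfold cnt
  apply Finset.card_bij' (fun x _ => x + (-d)) (fun y _ => y + d)
  · intro a ha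
    simp only [mem_filter] at ha ⊢
    refine ⟨ha.2, by simpa using ha.1⟩
  · intro a ha
    simp only [mem_filter] at ha ⊢
    refine ⟨ha.2, by simpa using ha.1⟩
  · intro a _; abel
  · intro a _; abel

lemma bondPairs2_eq2 (E : Finset (ℤ × ℤ)) :
    bondPairs2 E = 2 * cnt E (1,0) + 2 * cnt E (0,1) := by
  rw [bondPairs2_eq, sum_dirs (cnt E)]
  have h1 : cnt E (-1,0) = cnt E (1,0) := by
    have := cnt_neg E (1,0); simpa using this
  have h2 : cnt E (0,-1) = cnt E (0,1) := by
    have := cnt_neg E (0,1); simpa using this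
  omega

lemma cnt_le_row (F : Finset (ℤ × ℤ)) :
    cnt F (1,0) + (F.image Prod.snd).card ≤ F.card := by
  classical
  set S := F.filter (fun x => x + (1,0) ∈ F) with hS
  have hsub : S ⊆ F := Finset.filter_subset _ _
  have hle : (F.image Prod.snd).card ≤ (F \ S).card := by
    apply Finset.card_le_card_of_injOn
      (f := fun y => (WithBot.unbotD 0 (((F.filter (fun x => x.2 = y)).image Prod.fst).max), y))
    · intro y hy
      simp only [Finset.mem_coe, Finset.mem_image] at hy ⊢
      obtain ⟨x, hx, rfl⟩ := hy
      have hne : ((F.filter (fun z => z.2 = x.2)).image Prod.fst).Nonempty :=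
        ⟨x.1, Finset.mem_image.mpr ⟨x, Finset.mem_filter.mpr ⟨hx, rfl⟩, rfl⟩⟩
      obtain ⟨m, hm⟩ := Finset.max_of_nonempty hne
      have hmval : WithBot.unbotD 0 (((F.filter (fun z => z.2 = x.2)).image Prod.fst).max) = m := by
        rw [hm]; rfl
      have hmmem : m ∈ (F.filter (fun z => z.2 = x.2)).image Prod.fst := Finset.mem_of_max hm
      obtain ⟨z, hz, hz1⟩ := Finset.mem_image.mp hmmem
      have hzF := (Finset.mem_filter.mp hz).1
      have hz2 := (Finset.mem_filter.mp hz).2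
      rw [hmval]
      have hzeq : (m, x.2) = z := by
        ext <;> simp [hz1.symm, hz2.symm]
      rw [Finset.mem_sdiff]
      constructor
      · rw [hzeq]; exact hzF
      · intro hmem
        rw [hS, Finset.mem_filter] at hmem
        have : (m + 1 : ℤ) ∈ (F.filter (fun z => z.2 = x.2)).image Prod.fst := by
          refine Finset.mem_image.mpr ⟨(m,x.2) + (1,0),
            Finset.mem_filter.mpr ⟨hmem.2, by simp⟩, rfl⟩
        have := Finset.le_max_of_eq this hm
        omega
    · intro y₁ _ y₂ _ h
      simpa using congrArg Prod.snd h
  have : (F \ S).card = F.card - S.card := Finset.card_sdiff_of_subset hsub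
  have hSc : S.card ≤ F.card := Finset.card_le_card hsub
  unfold cnt
  rw [← hS]
  omega

lemma swap_mem (F : Finset (ℤ × ℤ)) (z : ℤ × ℤ) :
    z ∈ F.image Prod.swap ↔ z.swap ∈ F := by
  simp only [Finset.mem_image]
  constructor
  · rintro ⟨w, hw, rfl⟩; simpa using hw
  · intro h; exact ⟨z.swap, h, by simp⟩

lemma cnt_le_col (F : Finset (ℤ × ℤ)) :
    cnt F (0,1) + (F.image Prod.fst).card ≤ F.card := by
  classical
  have hcard : (F.image Prod.swap).card = F.card :=
    Finset.card_image_of_injective _ (fun a b h => by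
      have h1 := congrArg Prod.fst h; have h2 := congrArg Prod.snd h
      simp [Prod.swap] at h1 h2; ext <;> simp [h1, h2])
  have himg : (F.image Prod.swap).image Prod.snd = F.image Prod.fst := by
    rw [Finset.image_image]; rfl
  have hcnt : cnt F (0,1) = cnt (F.image Prod.swap) (1,0) := by
    unfold cnt
    apply Finset.card_bij' (fun x _ => x.swap) (fun y _ => y.swap)
    · intro a _; simp
    · intro a _; simp
    · intro a ha
      rw [Finset.mem_filter] at ha ⊢
      rw [swap_mem, swap_mem]
      constructor
      · simpa using ha.1
      · have h : (a.swap + (1,0)).swap = a + (0,1) := by ext <;> simp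
        rw [h]; exact ha.2
    · intro a ha
      rw [Finset.mem_filter] at ha ⊢
      rw [swap_mem, swap_mem] at ha
      refine ⟨ha.1, ?_⟩
      have h : a.swap + (0,1) = (a + (1,0)).swap := by ext <;> simp
      rw [h]; exact ha.2
  have := cnt_le_row (F.image Prod.swap)
  rw [himg, hcard] at this
  omega

lemma card_le_prod (F : Finset (ℤ × ℤ)) :
    F.card ≤ (F.image Prod.fst).card * (F.image Prod.snd).card := by
  calc F.card ≤ ((F.image Prod.fst) ×ˢ (F.image Prod.snd)).card := by
        apply Finset.card_le_card
        intro x hx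
        rw [Finset.mem_product]
        exact ⟨Finset.mem_image_of_mem _ hx, Finset.mem_image_of_mem _ hx⟩
    _ = _ := Finset.card_product _ _

lemma card_rect_col (A B C E : ℤ) (h : A < C) :
    ((Finset.Icc (1:ℤ) A ×ˢ Finset.Icc (1:ℤ) B) ∪ ({C} ×ˢ Finset.Icc (1:ℤ) E)).card
      = A.toNat * B.toNat + E.toNat := by
  rw [Finset.card_union_of_disjoint]
  · rw [Finset.card_product, Finset.card_product, Finset.card_singleton, one_mul,
      Int.card_Icc, Int.card_Icc, Int.card_Icc]
    congr 1 <;> [skip; omega]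
    congr 1 <;> omega
  · rw [Finset.disjoint_left]
    rintro ⟨x, y⟩ hx hy
    simp only [Finset.mem_product, Finset.mem_Icc, Finset.mem_singleton] at hx hy
    omega

/-- Membership in `Rspq`. -/
lemma mem_Rspq (s p q : ℕ) (x y : ℤ) :
    (x, y) ∈ Rspq s p q ↔
      (1 ≤ x ∧ x ≤ (s:ℤ) - p - 1 ∧ 1 ≤ y ∧ y ≤ (s:ℤ)) ∨
      (x = (s:ℤ) - p ∧ 1 ≤ y ∧ y ≤ (s:ℤ) - q) := by
  simp only [Rspq, Finset.mem_union, Finset.mem_product, Finset.mem_Icc, Finset.mem_singleton]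
  tauto

lemma card_Rspq (s p q : ℕ) :
    (Rspq s p q).card = ((s:ℤ) - p - 1).toNat * s + ((s:ℤ) - q).toNat := by
  rw [Rspq, card_rect_col _ _ _ _ (by omega)]
  congr 1

/-- Horizontal bonded count in `Rspq`. -/
lemma cnt_Rspq_H (s p q : ℕ) (hp : (p:ℤ) + 2 ≤ s) (hq : (q:ℤ) ≤ s) :
    cnt (Rspq s p q) (1,0) = (Rspq s (p+1) q).card := by
  unfold cnt
  congr 1
  ext ⟨x, y⟩
  rw [Finset.mem_filter]
  have h1 : ((x,y) : ℤ × ℤ) + (1,0) = (x+1, y) := by ext <;> simp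
  rw [h1, mem_Rspq, mem_Rspq, mem_Rspq]
  push_cast
  omega

/-- Vertical bonded count in `Rspq`. -/
lemma cnt_Rspq_V (s p q : ℕ) :
    cnt (Rspq s p q) (0,1) =
      ((Finset.Icc (1:ℤ) ((s:ℤ)-p-1) ×ˢ Finset.Icc (1:ℤ) ((s:ℤ)-1)) ∪
        ({(s:ℤ)-p} ×ˢ Finset.Icc (1:ℤ) ((s:ℤ)-q-1))).card := by
  unfold cnt
  congr 1
  ext ⟨x, y⟩
  rw [Finset.mem_filter]
  have h1 : ((x,y) : ℤ × ℤ) + (0,1) = (x, y+1) := by ext <;> simp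
  rw [h1, mem_Rspq, mem_Rspq]
  simp only [Finset.mem_union, Finset.mem_product, Finset.mem_Icc, Finset.mem_singleton]
  omega


set_option maxHeartbeats 1000000 in
/-- Main auxiliary lemma: given exact bond counts for `Rspq`, it is a minimizer. -/
lemma main_aux (s p q cH cV : ℕ) (hps1 : p + 1 ≤ s)
    (hcrit : 4 * ((s : ℤ) - q) > ((p : ℤ) + 1) ^ 2)
    (hn : ((Rspq s p q).card : ℤ) = (s : ℤ) * s - s * p - q)
    (hH : cnt (Rspq s p q) (1,0) = cH) (hV : cnt (Rspq s p q) (0,1) = cV)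
    (hbond : 4 * ((Rspq s p q).card : ℤ) = 2 * cH + 2 * cV + 2 * (2 * (s:ℤ) - p))
    (F : Finset (ℤ × ℤ)) (hF : F.card = (Rspq s p q).card) :
    theta2 (Rspq s p q) ≤ theta2 F := by
  set R := Rspq s p q with hR
  clear_value R
  have hbR : bondPairs2 R = 2 * cH + 2 * cV := by
    rw [bondPairs2_eq2, hH, hV]
  have htb : theta2 R + bondPairs2 R = 4 * R.card := theta_add_bond R
  have hthetaR : (theta2 R : ℤ) = 2 * (2 * (s:ℤ) - p) := by
    have h1 : ((theta2 R : ℕ) : ℤ) + ((bondPairs2 R : ℕ) : ℤ) = 4 * (R.card : ℤ) := by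
      exact_mod_cast congrArg (Nat.cast : ℕ → ℤ) htb
    rw [hbR] at h1
    push_cast at h1
    omega
  -- lower bound for F
  have h1 := cnt_le_row F
  have h2 := cnt_le_col F
  have h3 := card_le_prod F
  have htbF := theta_add_bond F
  have hbF := bondPairs2_eq2 F
  set r := (F.image Prod.snd).card with hr
  set c := (F.image Prod.fst).card with hc
  clear_value r c
  have hlow : 2 * (c + r) ≤ theta2 F := by omega
  have hsum : 2 * s ≤ c + r + p := by
    by_contra hcon
    push_neg at hcon
    have hA : (c : ℤ) + r ≤ 2 * (s:ℤ) - p - 1 := by push_cast; omega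
    have hB : ((F.card : ℕ) : ℤ) ≤ (c : ℤ) * r := by exact_mod_cast h3
    have hFn : ((F.card : ℕ) : ℤ) = (s : ℤ) * s - s * p - q := by rw [hF]; exact hn
    have hcr0 : (0:ℤ) ≤ (c:ℤ) + r := by positivity
    have hsq : ((c:ℤ) + r)^2 ≥ 4 * ((c:ℤ) * r) := by nlinarith [sq_nonneg ((c:ℤ) - r)]
    have hub : ((c:ℤ) + r)^2 ≤ (2 * (s:ℤ) - p - 1)^2 := by
      have hM0 : (0:ℤ) ≤ 2 * (s:ℤ) - p - 1 := by push_cast; omega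
      exact pow_le_pow_left₀ hcr0 hA 2
    have hM2 : (2 * (s:ℤ) - p - 1)^2 < 4 * ((F.card : ℕ) : ℤ) := by
      rw [hFn]; nlinarith [hcrit]
    linarith
  have hend : (theta2 R : ℤ) ≤ (theta2 F : ℤ) := by
    rw [hthetaR]
    have : (2 * (c + r) : ℤ) ≤ (theta2 F : ℤ) := by exact_mod_cast hlow
    push_cast at this ⊢
    omega
  exact_mod_cast hend

set_option maxHeartbeats 1000000 in
/-- for `s ≥ 2`, with `p = ⌊√s⌋` and `q = ⌊s/4⌋`, one has
`4(s−q) > (p+1)²`, and consequently `R_{s,p,q}` minimizes the edge perimeter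
among subsets of `ℤ²` with `s² − s⌊√s⌋ − ⌊s/4⌋` elements. -/
theorem Rspq_sqrt_minimizer (s : ℕ) (hs : 2 ≤ s) :
    4 * ((s : ℤ) - (s / 4 : ℕ)) > ((Nat.sqrt s : ℤ) + 1) ^ 2 ∧
    (Rspq s (Nat.sqrt s) (s / 4)).card = s ^ 2 - s * Nat.sqrt s - s / 4 ∧
    ∀ F : Finset (ℤ × ℤ), F.card = s ^ 2 - s * Nat.sqrt s - s / 4 →
      theta2 (Rspq s (Nat.sqrt s) (s / 4)) ≤ theta2 F := by
  set p := Nat.sqrt s with hp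
  set q := s / 4 with hq
  clear_value p q
  -- basic numeric facts
  have hpp : p * p ≤ s := by
    rw [hp]
    have := Nat.sqrt_le' s
    rw [pow_two] at this
    exact this
  have hp1 : 1 ≤ p := by
    by_contra h
    have h0 : p < 1 := by omega
    rw [hp, Nat.sqrt_lt'] at h0
    omega
  have hq4 : 4 * q ≤ s := by rw [hq]; omega
  have hqs : q + 1 ≤ s := by omega
  have hps1 : p + 1 ≤ s := by nlinarith
  -- the criterion
  have hcrit : 4 * ((s : ℤ) - q) > ((p : ℤ) + 1) ^ 2 := by
    have c1 : (p : ℤ) * p ≤ s := by exact_mod_cast hpp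
    have c2 : 4 * (q : ℤ) ≤ s := by exact_mod_cast hq4
    have c3 : (p : ℤ) + 1 ≤ s := by exact_mod_cast hps1
    nlinarith
  -- the cardinality
  have hn : ((Rspq s p q).card : ℤ) = (s : ℤ) * s - s * p - q := by
    have t1 : ((((s:ℤ) - p - 1).toNat : ℤ)) = (s:ℤ) - p - 1 := by omega
    have t2 : ((((s:ℤ) - q).toNat : ℤ)) = (s:ℤ) - q := by omega
    rw [card_Rspq]
    push_cast [t1, t2]
    ring
  have hmul : s * p + s ≤ s ^ 2 := by nlinarith
  have hd1 : s * p ≤ s ^ 2 := by nlinarith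
  have hqle : q ≤ s := by omega
  have hd2 : q ≤ s ^ 2 - s * p :=
    Nat.le_sub_of_add_le (le_trans (Nat.add_le_add_right (by omega : q ≤ s) _)
      (by rw [add_comm]; exact hmul))
  have hcard : (Rspq s p q).card = s ^ 2 - s * p - q := by
    zify [hd1, hd2]
    push_cast
    linear_combination hn
  refine ⟨hcrit, hcard, ?_⟩
  intro F hF
  rw [← hcard] at hF
  by_cases hs3 : 3 ≤ s
  · -- general case: p + 2 ≤ s
    have hps2 : p + 2 ≤ s := by
      have h0 : p < s - 1 := by
        rw [hp, Nat.sqrt_lt']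
        have ha : s = (s - 1) + 1 := by omega
        have hb : 2 ≤ s - 1 := by omega
        nlinarith [ha, hb]
      omega
    have hHval : cnt (Rspq s p q) (1,0) =
        ((s:ℤ) - (p+1) - 1).toNat * s + ((s:ℤ) - q).toNat := by
      rw [cnt_Rspq_H s p q (by exact_mod_cast (by omega : (p:ℤ) + 2 ≤ (s:ℤ)) ) (by exact_mod_cast hqle),
        card_Rspq]
      push_cast
      ring_nf
    have hVval : cnt (Rspq s p q) (0,1) =
        ((s:ℤ) - p - 1).toNat * ((s:ℤ) - 1).toNat + ((s:ℤ) - q - 1).toNat := by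
      rw [cnt_Rspq_V, card_rect_col _ _ _ _ (by omega)]
    apply main_aux s p q _ _ hps1 hcrit hn hHval hVval _ F hF
    have u1 : ((((s:ℤ) - (p+1) - 1).toNat : ℤ)) = (s:ℤ) - p - 2 := by omega
    have u2 : ((((s:ℤ) - q).toNat : ℤ)) = (s:ℤ) - q := by omega
    have u3 : ((((s:ℤ) - p - 1).toNat : ℤ)) = (s:ℤ) - p - 1 := by omega
    have u4 : ((((s:ℤ) - 1).toNat : ℤ)) = (s:ℤ) - 1 := by omega
    have u5 : ((((s:ℤ) - q - 1).toNat : ℤ)) = (s:ℤ) - q - 1 := by omega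
    push_cast [u1, u2, u3, u4, u5]
    linear_combination 4 * hn
  · -- s = 2
    have hs2 : s = 2 := by omega
    subst hs2
    have hpv : p = 1 := by
      have h2 : p < 2 := by
        rw [hp, Nat.sqrt_lt']
        norm_num
      omega
    have hqv : q = 0 := by rw [hq]
    have hHval : cnt (Rspq 2 p q) (1,0) = 0 := by
      rw [hpv, hqv]
      unfold cnt
      rw [Finset.card_eq_zero, Finset.eq_empty_iff_forall_notMem]
      rintro ⟨x, y⟩ hmem
      rw [Finset.mem_filter] at hmem
      have h1 : ((x,y) : ℤ × ℤ) + (1,0) = (x+1, y) := by ext <;> simp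
      rw [h1, mem_Rspq, mem_Rspq] at hmem
      push_cast at hmem
      omega
    have hVval : cnt (Rspq 2 p q) (0,1) = 1 := by
      rw [hpv, hqv, cnt_Rspq_V, card_rect_col _ _ _ _ (by norm_num)]
      norm_num
    apply main_aux 2 p q 0 1 hps1 hcrit hn hHval hVval _ F hF
    rw [hn, hpv, hqv]
    norm_num
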